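/- For every integer n ≥ 0, Σ_{r=0}^{n} (−1)^{n−r} 2^{2r} C(n+r+λ, r) C(n+r+1, 2r+1) / C(n+r+1, r) = ((n+1)/(2n+1)) · C(2n+2λ, 2n) / C(n+λ, n), as an identity of rational functions in λ. -/

import Mathlib

open Finset

/-- The generalized binomial coefficient `C(a, b) = a(a-1)⋯(a-b+1)/b!` for real `a`. -/
noncomputable def gbinom (a : ℝ) (b : ℕ) : ℝ :=
  (∏ i ∈ Finset.range b, (a - i)) / (b.factorial : ℝ)

noncomputable def rpoch (x : ℝ) (k : ℕ) : ℝ := ∏ i ∈ Finset.range k, (x + i)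

@[simp] lemma rpoch_zero (x : ℝ) : rpoch x 0 = 1 := by simp [rpoch]

lemma rpoch_succ (x : ℝ) (k : ℕ) : rpoch x (k+1) = rpoch x k * (x + k) :=
  Finset.prod_range_succ _ _

lemma rpoch_pos {x : ℝ} (hx : 0 < x) (k : ℕ) : 0 < rpoch x k := by
  apply Finset.prod_pos; intro i _; positivity

lemma rpoch_add (x : ℝ) (a b : ℕ) : rpoch x (a+b) = rpoch x a * rpoch (x+a) b := by
  rw [rpoch, Finset.prod_range_add]
  congr 1
  apply Finset.prod_congr rfl
  intro i _; push_cast; ring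

lemma rpoch_reflect (x : ℝ) (n : ℕ) : rpoch (-x - n + 1) n = (-1)^n * rpoch x n := by
  rw [rpoch, ← Finset.prod_range_reflect]
  rw [show ((-1:ℝ))^n = ∏ _i ∈ Finset.range n, (-1:ℝ) by simp, rpoch,
    ← Finset.prod_mul_distrib]
  apply Finset.prod_congr rfl
  intro j hj
  have hj' : j < n := Finset.mem_range.mp hj
  have h1 : ((n - 1 - j : ℕ) : ℝ) = (n : ℝ) - 1 - j := by
    have : n - 1 - j = n - (1 + j) := by omega
    rw [this, Nat.cast_sub (by omega)]
    push_cast; ring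
  rw [h1]; ring

lemma fact_rpoch (r : ℕ) : ((2*r+1).factorial : ℝ) = r.factorial * 4^r * rpoch (3/2) r := by
  induction r with
  | zero => simp
  | succ r ih =>
    have h1 : ((2*(r+1)+1).factorial : ℝ) = (2*r+3) * (2*r+2) * (2*r+1).factorial := by
      rw [show 2*(r+1)+1 = (2*r+1) + 1 + 1 by ring, Nat.factorial_succ, Nat.factorial_succ]
      push_cast; ring
    rw [h1, ih, rpoch_succ, Nat.factorial_succ]
    push_cast; ring

lemma gbinom_eq (a : ℝ) (k : ℕ) : gbinom a k = rpoch (a - k + 1) k / k.factorial := by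
  rw [gbinom, rpoch]
  congr 1
  rw [← Finset.prod_range_reflect]
  apply Finset.prod_congr rfl
  intro j hj
  have hj' : j < k := Finset.mem_range.mp hj
  have h1 : ((k - 1 - j : ℕ) : ℝ) = (k : ℝ) - 1 - j := by
    have : k - 1 - j = k - (1 + j) := by omega
    rw [this, Nat.cast_sub (by omega)]
    push_cast; ring
  rw [h1]; ring

lemma rpoch_succ' (x : ℝ) (k : ℕ) : rpoch x (k+1) = x * rpoch (x+1) k := by
  rw [rpoch, Finset.prod_range_succ']
  rw [show (∏ i ∈ Finset.range k, (x + ↑(i+1))) = ∏ i ∈ Finset.range k, (x + 1 + ↑i) from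
    Finset.prod_congr rfl (fun i _ => by push_cast; ring)]
  rw [rpoch]; push_cast; ring


/-- Divisionless terminating Chu–Vandermonde. -/
lemma vand (n : ℕ) : ∀ (b c : ℝ),
    ∑ r ∈ Finset.range (n+1),
      (-1:ℝ)^r * (n.choose r) * rpoch b r * rpoch (c + r) (n - r) = rpoch (c - b) n := by
  induction n with
  | zero => intro b c; simp
  | succ n ih =>
    intro b c
    rw [Finset.sum_range_succ']
    simp only [pow_zero, Nat.choose_zero_right, Nat.cast_one, Nat.cast_zero, one_mul, mul_one,
      add_zero, Nat.sub_zero, rpoch_zero]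
    have hsplit : ∀ r ∈ Finset.range (n+1),
        (-1:ℝ)^(r+1) * (((n+1).choose (r+1) : ℕ) : ℝ) * rpoch b (r+1) *
            rpoch (c + ((r+1 : ℕ) : ℝ)) (n+1 - (r+1))
        = (-b * ((-1:ℝ)^r * (n.choose r) * rpoch (b+1) r * rpoch ((c+1) + r) (n - r)))
          + (-1:ℝ)^(r+1) * ((n.choose (r+1) : ℕ) : ℝ) * rpoch b (r+1) *
            rpoch (c + ((r+1 : ℕ) : ℝ)) (n - r) := by
      intro r _
      rw [show n+1-(r+1) = n-r by omega, Nat.choose_succ_succ, rpoch_succ',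
        show c + ((r+1 : ℕ) : ℝ) = (c+1) + (r:ℝ) by push_cast; ring]
      push_cast
      ring
    rw [Finset.sum_congr rfl hsplit, Finset.sum_add_distrib, ← Finset.mul_sum, ih (b+1) (c+1),
      show c + 1 - (b+1) = c - b by ring]
    have hA : (∑ r ∈ Finset.range (n+1),
          (-1:ℝ)^(r+1) * ((n.choose (r+1) : ℕ) : ℝ) * rpoch b (r+1) *
            rpoch (c + ((r+1 : ℕ) : ℝ)) (n - r))
        + rpoch c (n+1) = (c + n) * rpoch (c - b) n := by
      have hF : ∑ r ∈ Finset.range (n+2),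
          (-1:ℝ)^r * (n.choose r) * rpoch b r * rpoch (c + r) (n+1 - r)
          = (c + n) * rpoch (c - b) n := by
        rw [Finset.sum_range_succ, Nat.choose_succ_self]
        have h2 : ∀ r ∈ Finset.range (n+1),
            (-1:ℝ)^r * (n.choose r) * rpoch b r * rpoch (c + r) (n+1 - r)
            = (c + (n:ℝ)) * ((-1:ℝ)^r * (n.choose r) * rpoch b r * rpoch (c + r) (n - r)) := by
          intro r hr
          have hr' : r ≤ n := Nat.lt_succ_iff.mp (Finset.mem_range.mp hr)
          rw [show n + 1 - r = (n - r) + 1 by omega, rpoch_succ, Nat.cast_sub hr']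
          ring
        rw [Finset.sum_congr rfl h2, ← Finset.mul_sum, ih b c]
        simp
      rw [Finset.sum_range_succ'] at hF
      simp only [pow_zero, Nat.choose_zero_right, Nat.cast_one, Nat.cast_zero, one_mul, mul_one,
        add_zero, Nat.sub_zero, rpoch_zero] at hF
      rw [← hF]
      congr 1
      apply Finset.sum_congr rfl
      intro r _
      rw [show n+1-(r+1) = n-r by omega]
    rw [add_assoc, hA, rpoch_succ]
    ring


lemma key (n : ℕ) (l : ℝ) :
    (∑ r ∈ Finset.range (n + 1),
      (-1 : ℝ) ^ (n - r) * 2 ^ (2 * r) * gbinom ((n : ℝ) + r + l) r *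
        ((n + r + 1).choose (2 * r + 1) : ℝ) / ((n + r + 1).choose r : ℝ))
    = ((n+1).factorial : ℝ) * rpoch (l + 1/2) n / ((n.factorial : ℝ) * rpoch (3/2) n) := by
  have hv := vand n (l + (n:ℝ) + 1) (3/2)
  rw [show (3/2:ℝ) - (l + ↑n + 1) = -(l + 1/2) - ↑n + 1 by ring, rpoch_reflect] at hv
  have hstep : ∀ r ∈ Finset.range (n+1),
      (-1 : ℝ) ^ (n - r) * 2 ^ (2 * r) * gbinom ((n : ℝ) + r + l) r *
        ((n + r + 1).choose (2 * r + 1) : ℝ) / ((n + r + 1).choose r : ℝ)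
      = ((-1:ℝ)^n * ((n+1).factorial : ℝ) / ((n.factorial : ℝ) * rpoch (3/2) n)) *
        ((-1:ℝ)^r * (n.choose r) * rpoch (l + (n:ℝ) + 1) r * rpoch (3/2 + r) (n - r)) := by
    intro r hrr
    have hr : r ≤ n := Nat.lt_succ_iff.mp (Finset.mem_range.mp hrr)
    have e1 : gbinom ((n:ℝ)+r+l) r = rpoch (l + (n:ℝ) + 1) r / r.factorial := by
      rw [gbinom_eq, show (n:ℝ)+↑r+l - ↑r + 1 = l + ↑n + 1 by ring]
    have e2 : ((n+r+1).choose (2*r+1) : ℝ)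
        = ((n+r+1).factorial : ℝ) / (((2*r+1).factorial : ℝ) * ((n-r).factorial : ℝ)) := by
      rw [Nat.cast_choose ℝ (by omega : 2*r+1 ≤ n+r+1), show n+r+1 - (2*r+1) = n-r by omega]
    have e3 : ((n+r+1).choose r : ℝ)
        = ((n+r+1).factorial : ℝ) / ((r.factorial : ℝ) * (((n+1).factorial : ℝ))) := by
      rw [Nat.cast_choose ℝ (by omega : r ≤ n+r+1), show n+r+1 - r = n+1 by omega]
    have e4 : ((n.choose r : ℕ) : ℝ) = (n.factorial : ℝ)/((r.factorial:ℝ) * ((n-r).factorial:ℝ)) :=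
      Nat.cast_choose ℝ hr
    have e5 : rpoch (3/2) n = rpoch (3/2) r * rpoch (3/2 + (r:ℝ)) (n - r) := by
      have h := rpoch_add (3/2) r (n-r)
      rw [show r + (n-r) = n by omega] at h
      exact h
    have e6 : (2:ℝ)^(2*r) = 4^r := by rw [pow_mul]; norm_num
    have hsign : (-1:ℝ)^(n-r) = (-1:ℝ)^n * (-1:ℝ)^r := by
      rw [← pow_add, show n + r = (n-r) + 2*r by omega, pow_add, pow_mul]
      norm_num
    have hf : ((2*r+1).factorial : ℝ) = r.factorial * 4^r * rpoch (3/2) r := fact_rpoch r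
    have p1 : (0:ℝ) < rpoch (3/2) r := rpoch_pos (by norm_num) r
    have p2 : (0:ℝ) < rpoch (3/2 + (r:ℝ)) (n - r) := rpoch_pos (by positivity) (n-r)
    rw [e1, e2, e3, e4, e5, e6, hsign, hf]
    have q1 : ((n+r+1).factorial : ℝ) ≠ 0 := Nat.cast_ne_zero.mpr (Nat.factorial_ne_zero _)
    have q2 : (r.factorial : ℝ) ≠ 0 := Nat.cast_ne_zero.mpr (Nat.factorial_ne_zero _)
    have q3 : ((n-r).factorial : ℝ) ≠ 0 := Nat.cast_ne_zero.mpr (Nat.factorial_ne_zero _)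
    have q4 : ((n+1).factorial : ℝ) ≠ 0 := Nat.cast_ne_zero.mpr (Nat.factorial_ne_zero _)
    have q5 : (n.factorial : ℝ) ≠ 0 := Nat.cast_ne_zero.mpr (Nat.factorial_ne_zero _)
    have p1' : rpoch (3/2) r ≠ 0 := ne_of_gt p1
    have p2' : rpoch (3/2 + (r:ℝ)) (n - r) ≠ 0 := ne_of_gt p2
    have p2'' : rpoch ((3 + (r:ℝ)*2)/2) (n - r) ≠ 0 := by
      rw [show ((3 + (r:ℝ)*2)/2) = 3/2 + (r:ℝ) by ring]; exact p2'
    field_simp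
    ring
    rw [mul_inv_cancel_right₀ p2']
  rw [Finset.sum_congr rfl hstep, ← Finset.mul_sum, hv]
  have hone : (-1:ℝ)^n * (-1:ℝ)^n = 1 := by
    rw [← pow_add, ← two_mul, pow_mul]; norm_num
  have h2 : ((-1:ℝ)^n * (((n+1).factorial : ℕ) : ℝ) / (((n.factorial : ℕ) : ℝ) * rpoch (3/2) n)) *
      ((-1:ℝ)^n * rpoch (l + 1/2) n)
      = ((-1:ℝ)^n * (-1:ℝ)^n) *
        ((((n+1).factorial : ℕ) : ℝ) * rpoch (l + 1/2) n / (((n.factorial : ℕ) : ℝ) * rpoch (3/2) n)) := by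
    ring
  rw [h2, hone, one_mul]

lemma double_split (l : ℝ) (n : ℕ) :
    rpoch (2*l+1) (2*n) = 4^n * rpoch (l + 1/2) n * rpoch (l+1) n := by
  induction n with
  | zero => simp
  | succ n ih =>
    rw [show 2*(n+1) = (2*n)+1+1 by ring, rpoch_succ, rpoch_succ, ih,
      rpoch_succ (l+1/2), rpoch_succ (l+1)]
    push_cast
    ring

theorem combinatorial_identity_odd (n : ℕ) (l : ℝ) :
    (2 * (n : ℝ) + 1) *
        (∑ r ∈ Finset.range (n + 1),
          (-1 : ℝ) ^ (n - r) * 2 ^ (2 * r) * gbinom ((n : ℝ) + r + l) r *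
            ((n + r + 1).choose (2 * r + 1) : ℝ) / ((n + r + 1).choose r : ℝ)) *
      gbinom ((n : ℝ) + l) n =
    ((n : ℝ) + 1) * gbinom (2 * (n : ℝ) + 2 * l) (2 * n) := by
  rw [key, gbinom_eq ((n:ℝ)+l) n, show (n:ℝ)+l - ↑n + 1 = l+1 by ring,
    gbinom_eq (2*(n:ℝ)+2*l) (2*n), show 2*(n:ℝ)+2*l - ↑(2*n) + 1 = 2*l+1 by push_cast; ring,
    double_split]
  have hf : ((2*n+1).factorial : ℝ) = n.factorial * 4^n * rpoch (3/2) n := fact_rpoch n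
  have hf2 : ((2*n+1).factorial : ℝ) = (2*(n:ℝ)+1) * ((2*n).factorial : ℝ) := by
    rw [Nat.factorial_succ]; push_cast; ring
  have q5 : (n.factorial : ℝ) ≠ 0 := Nat.cast_ne_zero.mpr (Nat.factorial_ne_zero _)
  have q6 : ((n+1).factorial : ℝ) = ((n:ℝ)+1) * n.factorial := by
    rw [Nat.factorial_succ]; push_cast; ring
  have q7 : ((2*n).factorial : ℝ) ≠ 0 := Nat.cast_ne_zero.mpr (Nat.factorial_ne_zero _)
  have p1 : (0:ℝ) < rpoch (3/2) n := rpoch_pos (by norm_num) n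
  rw [q6]
  field_simp
  rw [show ((2*l+1)/2 : ℝ) = l + 1/2 by ring]
  linear_combination rpoch (l + 1/2) n * rpoch (l+1) n * (hf - hf2)
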